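/- For real numbers λ₁,…,λₙ (n>1) and 1 ≤ r ≤ n−1, define H_r = S_r/ C(n,r) where S_r is the r-th elementary symmetric polynomial of the λᵢ. Then H_r² ≥ H_{r−1}·H_{r+1}. -/

import Mathlib

/-- The `r`-th elementary symmetric polynomial of `v`. -/
noncomputable def esymm (n r : ℕ) (v : Fin n → ℝ) : ℝ :=
  ∑ s ∈ Finset.powersetCard r Finset.univ, ∏ i ∈ s, v i

/-- Normalized symmetric function `H_r = S_r / C(n,r)`. -/
noncomputable def Hsym (n r : ℕ) (v : Fin n → ℝ) : ℝ :=
  esymm n r v / (n.choose r : ℝ)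

open Polynomial Finset

private lemma esymm_eq_multiset (n r : ℕ) (v : Fin n → ℝ) :
    esymm n r v = (Multiset.map v Finset.univ.val).esymm r := by
  rw [Finset.esymm_map_val]; rfl

private lemma exists_fn (n : ℕ) (s : Multiset ℝ) (h : Multiset.card s = n) :
    ∃ v : Fin n → ℝ, Multiset.map v Finset.univ.val = s := by
  have hl : s.toList.length = n := by rw [Multiset.length_toList, h]
  subst hl
  refine ⟨s.toList.get, ?_⟩
  have h1 : (Finset.univ.val : Multiset (Fin s.toList.length))
      = ↑(List.finRange s.toList.length) := rfl
  rw [h1, Multiset.map_coe, ← List.ofFn_eq_map, List.ofFn_get, Multiset.coe_toList]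

private lemma mesymm_zero (s : Multiset ℝ) : s.esymm 0 = 1 := by
  simp [Multiset.esymm, Multiset.powersetCard_zero_left]

private lemma mesymm_cons (a : ℝ) (s : Multiset ℝ) (k : ℕ) :
    (a ::ₘ s).esymm (k + 1) = s.esymm (k + 1) + a * s.esymm k := by
  rw [Multiset.esymm, Multiset.powersetCard_cons, Multiset.map_add, Multiset.sum_add,
    Multiset.map_map]
  congr 1
  rw [Multiset.esymm, ← Multiset.sum_map_mul_left]
  congr 1
  apply Multiset.map_congr rfl
  intro t _
  simp [Multiset.prod_cons]

private lemma mesymm_one (s : Multiset ℝ) : s.esymm 1 = s.sum := by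
  induction s using Multiset.induction with
  | empty => simp [Multiset.esymm, Multiset.powersetCard_zero_right]
  | cons a s ih =>
    rw [show (1:ℕ) = 0 + 1 from rfl, mesymm_cons, mesymm_zero, ih, Multiset.sum_cons]
    ring

private lemma sq_sum_m (s : Multiset ℝ) :
    s.sum ^ 2 = (s.map (· ^ 2)).sum + 2 * s.esymm 2 := by
  induction s using Multiset.induction with
  | empty => simp [Multiset.esymm, Multiset.powersetCard_zero_right]
  | cons a s ih =>
    rw [Multiset.sum_cons, Multiset.map_cons, Multiset.sum_cons,
      show (2:ℕ) = 1 + 1 from rfl, mesymm_cons, mesymm_one]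
    linear_combination ih

private lemma cs_step (n Q S a : ℝ) (hn : 0 ≤ n) (hQ : 0 ≤ Q) (ih : S^2 ≤ n*Q) :
    (a+S)^2 ≤ (n+1)*(a^2+Q) := by
  rcases eq_or_lt_of_le hn with h0 | hpos
  · have hS : S = 0 := by nlinarith [sq_nonneg S]
    subst hS; nlinarith [sq_nonneg a]
  · have key : 0 ≤ n*((n+1)*(a^2+Q) - (a+S)^2) := by
      nlinarith [sq_nonneg (n*a - S),
        mul_nonneg (show (0:ℝ) ≤ n+1 by linarith) (show (0:ℝ) ≤ n*Q - S^2 by linarith)]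
    have h3 := le_of_mul_le_mul_left
      (show n*0 ≤ n*((n+1)*(a^2+Q) - (a+S)^2) by linarith [key]) hpos
    linarith

private lemma cs_m (s : Multiset ℝ) :
    s.sum ^ 2 ≤ (Multiset.card s) * (s.map (· ^ 2)).sum := by
  induction s using Multiset.induction with
  | empty => simp
  | cons a s ih =>
    have hQ : 0 ≤ (s.map (· ^ 2)).sum := Multiset.sum_nonneg (by
      intro x hx
      obtain ⟨y, _, rfl⟩ := Multiset.mem_map.mp hx
      positivity)
    have hn : (0:ℝ) ≤ (Multiset.card s : ℝ) := by positivity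
    simp only [Multiset.sum_cons, Multiset.map_cons, Multiset.card_cons]
    push_cast
    have := cs_step (Multiset.card s : ℝ) ((s.map (· ^ 2)).sum) s.sum a hn hQ ih
    linarith

private lemma choose_two (n : ℕ) : (n.choose 2 : ℝ) * 2 = n * (n - 1 : ℕ) := by
  have h := Nat.choose_succ_right_eq n 1
  rw [Nat.choose_one_right] at h
  exact_mod_cast congrArg (Nat.cast : ℕ → ℝ) h

private lemma newton_one (n : ℕ) (hn : 2 ≤ n) (v : Fin n → ℝ) :
    Hsym n 0 v * Hsym n 2 v ≤ Hsym n 1 v ^ 2 := by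
  set M := Multiset.map v Finset.univ.val with hM
  have hcard : Multiset.card M = n := by simp [hM]
  have e0 : esymm n 0 v = 1 := by rw [esymm_eq_multiset, mesymm_zero]
  have e1 : esymm n 1 v = M.sum := by rw [esymm_eq_multiset, mesymm_one]
  have hsq : M.sum ^ 2 = (M.map (· ^ 2)).sum + 2 * esymm n 2 v := by
    rw [esymm_eq_multiset]; exact sq_sum_m M
  have hcs : M.sum ^ 2 ≤ n * (M.map (· ^ 2)).sum := by
    have := cs_m M; rwa [hcard] at this
  have hQ : 0 ≤ (M.map (· ^ 2)).sum := Multiset.sum_nonneg (by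
    intro x hx
    obtain ⟨y, _, rfl⟩ := Multiset.mem_map.mp hx
    positivity)
  have hc2 : (0:ℝ) < (n.choose 2 : ℝ) := by exact_mod_cast Nat.choose_pos hn
  have hn0 : (0:ℝ) < (n:ℝ) := by positivity
  have hch2 := choose_two n
  have hcast : ((n - 1 : ℕ) : ℝ) = (n:ℝ) - 1 := by
    have : (1:ℕ) ≤ n := by omega
    push_cast [this]; ring
  rw [hcast] at hch2
  unfold Hsym
  rw [e0, e1, Nat.choose_zero_right, Nat.choose_one_right]
  rw [div_pow, div_mul_div_comm, div_le_div_iff₀ (by positivity) (by positivity)]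
  have h2n : (2:ℝ) ≤ (n:ℝ) := by exact_mod_cast hn
  have key : esymm n 2 v * (n:ℝ)^2 * 2 ≤ M.sum^2 * ((n.choose 2:ℝ) * 2) := by
    rw [hch2]; nlinarith [mul_le_mul_of_nonneg_left hcs (le_of_lt hn0)]
  push_cast
  linarith [key]

private lemma esymm_compl (n k : ℕ) (hk : k ≤ n) (v : Fin n → ℝ) (hv : ∀ i, v i ≠ 0) :
    esymm n (n - k) v = (∏ i, v i) * esymm n k (fun i => (v i)⁻¹) := by
  unfold esymm
  rw [Finset.mul_sum]
  refine Finset.sum_nbij' (fun s => sᶜ) (fun s => sᶜ) ?_ ?_ ?_ ?_ ?_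
  · intro s hs
    rw [Finset.mem_powersetCard_univ] at hs ⊢
    rw [Finset.card_compl, hs, Fintype.card_fin]
    omega
  · intro s hs
    rw [Finset.mem_powersetCard_univ] at hs ⊢
    rw [Finset.card_compl, hs, Fintype.card_fin]
  · intro s _; simp
  · intro s _; simp
  · intro s _
    have hne : ∏ i ∈ sᶜ, v i ≠ 0 := Finset.prod_ne_zero_iff.mpr (fun i _ => hv i)
    rw [Finset.prod_inv_distrib]
    rw [← Finset.prod_compl_mul_prod s v]
    field_simp

private lemma newton_top (n : ℕ) (hn : 2 ≤ n) (v : Fin n → ℝ) :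
    Hsym n (n - 2) v * Hsym n n v ≤ Hsym n (n - 1) v ^ 2 := by
  by_cases h0 : ∃ i, v i = 0
  · obtain ⟨i, hi⟩ := h0
    have hP : ∏ j, v j = 0 := Finset.prod_eq_zero (Finset.mem_univ i) hi
    have he : esymm n n v = 0 := by
      unfold esymm
      have : Finset.powersetCard n (Finset.univ : Finset (Fin n)) = {Finset.univ} := by
        ext s
        simp only [Finset.mem_powersetCard_univ, Finset.mem_singleton]
        constructor
        · intro hs
          exact Finset.eq_univ_of_card s (by simp [hs])
        · rintro rfl; simp
      rw [this, Finset.sum_singleton, hP]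
    have h2 : Hsym n n v = 0 := by simp [Hsym, he]
    rw [h2, mul_zero]
    positivity
  · push_neg at h0
    set w : Fin n → ℝ := fun i => (v i)⁻¹ with hw
    set P : ℝ := ∏ i, v i with hPdef
    have hP : P ≠ 0 := Finset.prod_ne_zero_iff.mpr (fun i _ => h0 i)
    have key := newton_one n hn w
    have e0 : esymm n n v = P * esymm n 0 w := by
      have := esymm_compl n 0 (by omega) v h0
      rwa [Nat.sub_zero] at this
    have e1 : esymm n (n - 1) v = P * esymm n 1 w := esymm_compl n 1 (by omega) v h0
    have e2 : esymm n (n - 2) v = P * esymm n 2 w := esymm_compl n 2 (by omega) v h0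
    have c0 : n.choose (n - 0) = n.choose 0 := Nat.choose_symm (by omega)
    have c1 : n.choose (n - 1) = n.choose 1 := Nat.choose_symm (by omega)
    have c2 : n.choose (n - 2) = n.choose 2 := Nat.choose_symm (by omega)
    rw [Nat.sub_zero] at c0
    unfold Hsym
    rw [e0, e1, e2, c0, c1, c2]
    have hL : P * esymm n 2 w / (n.choose 2 : ℝ) * (P * esymm n 0 w / (n.choose 0 : ℝ))
        = P ^ 2 * (Hsym n 0 w * Hsym n 2 w) := by
      unfold Hsym; ring
    have hR : (P * esymm n 1 w / (n.choose 1 : ℝ)) ^ 2 = P ^ 2 * Hsym n 1 w ^ 2 := by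
      unfold Hsym; ring
    rw [hL, hR]
    exact mul_le_mul_of_nonneg_left key (sq_nonneg P)

private lemma deriv_step (n : ℕ) (hn : 1 ≤ n) (v : Fin n → ℝ) :
    ∃ w : Fin (n - 1) → ℝ, ∀ j, j ≤ n - 1 →
      (n : ℝ) * esymm (n - 1) j w = ((n : ℝ) - j) * esymm n j v := by
  set p : ℝ[X] := ∏ i, (X + C (v i)) with hp
  have hmono : p.Monic := monic_prod_of_monic _ _ fun i _ => monic_X_add_C (v i)
  have hdeg : p.natDegree = n := by
    rw [hp, natDegree_prod _ _ fun i _ => X_add_C_ne_zero (v i)]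
    simp [natDegree_X_add_C]
  have hcoeff : ∀ k, k ≤ n → p.coeff k = esymm n (n - k) v := by
    intro k hk
    rw [hp, Finset.prod_X_add_C_coeff _ _ (by simpa using hk)]
    unfold esymm
    congr 1
    simp
  have hroots : Multiset.card p.roots = n := by
    have hform : p = (Multiset.map (fun a => X - C a)
        (Multiset.map (fun i => -(v i)) Finset.univ.val)).prod := by
      rw [hp, Multiset.map_map, Finset.prod_eq_multiset_prod]
      apply congrArg
      apply Multiset.map_congr rfl
      intro i _
      simp [sub_neg_eq_add]
    rw [hform, roots_multiset_prod_X_sub_C]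
    simp
  set q := derivative p with hq
  have hqdeg_le : q.natDegree ≤ n - 1 := by
    have := natDegree_derivative_le p
    rw [hdeg, ← hq] at this
    exact this
  have hqcard_ge : n - 1 ≤ Multiset.card q.roots := by
    have := Polynomial.card_roots_le_derivative p
    rw [hroots, ← hq] at this
    omega
  have hqcard_le : Multiset.card q.roots ≤ q.natDegree := card_roots' q
  have hqdeg : q.natDegree = n - 1 := by omega
  have hqcard : Multiset.card q.roots = q.natDegree := by omega
  have hpn : p.coeff n = 1 := by
    rw [← hdeg]; exact hmono.coeff_natDegree
  have hlead : q.leadingCoeff = n := by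
    rw [Polynomial.leadingCoeff, hqdeg, hq, coeff_derivative,
      show n - 1 + 1 = n by omega, hpn, one_mul]
    push_cast [show ((n - 1 : ℕ) : ℝ) = (n : ℝ) - 1 by
      push_cast [Nat.cast_sub hn]; ring]
    ring
  obtain ⟨w, hwmap⟩ := exists_fn (n - 1) (q.roots.map (fun x => -x)) (by
    rw [Multiset.card_map]; omega)
  refine ⟨w, fun j hj => ?_⟩
  have h1 : esymm (n - 1) j w = (-1 : ℝ) ^ j * q.roots.esymm j := by
    rw [esymm_eq_multiset, hwmap]
    exact Multiset.esymm_neg q.roots j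
  have h2 : q.coeff (n - 1 - j) = (n : ℝ) * ((-1 : ℝ) ^ j * q.roots.esymm j) := by
    have hv := Polynomial.coeff_eq_esymm_roots_of_card hqcard
      (show n - 1 - j ≤ q.natDegree by omega)
    rw [hqdeg, show n - 1 - (n - 1 - j) = j by omega, hlead] at hv
    rw [hv]; ring
  have h3 : q.coeff (n - 1 - j) = ((n : ℝ) - j) * esymm n j v := by
    rw [hq, coeff_derivative, hcoeff (n - 1 - j + 1) (by omega),
      show n - (n - 1 - j + 1) = j by omega]
    have hc : ((n - 1 - j : ℕ) : ℝ) + 1 = (n : ℝ) - j := by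
      have : ((n - 1 - j : ℕ) : ℝ) = (n : ℝ) - 1 - j := by
        push_cast [Nat.cast_sub (show j ≤ n - 1 by omega), Nat.cast_sub hn]
        ring
      rw [this]; ring
    rw [hc]
    ring
  have hsq : (-1 : ℝ) ^ j * (-1 : ℝ) ^ j = 1 := by
    rw [← pow_add, ← two_mul, pow_mul]
    norm_num
  rw [h1]
  calc (n : ℝ) * ((-1 : ℝ) ^ j * q.roots.esymm j)
      = q.coeff (n - 1 - j) := by rw [h2]
    _ = ((n : ℝ) - j) * esymm n j v := h3

private lemma hsym_transfer (n : ℕ) (hn : 1 ≤ n) (v : Fin n → ℝ) (w : Fin (n - 1) → ℝ)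
    (hw : ∀ j, j ≤ n - 1 → (n : ℝ) * esymm (n - 1) j w = ((n : ℝ) - j) * esymm n j v)
    (j : ℕ) (hj : j ≤ n - 1) : Hsym (n - 1) j w = Hsym n j v := by
  have hnat : (n - j) * n.choose j = n * (n - 1).choose j := by
    obtain ⟨m, rfl⟩ : ∃ m, n = m + 1 := ⟨n - 1, by omega⟩
    have h1 := Nat.add_one_mul_choose_eq m j
    have h2 := Nat.choose_succ_right_eq (m + 1) j
    simp only [Nat.add_sub_cancel, Nat.succ_eq_add_one] at *
    rw [Nat.mul_comm]
    exact (h1.trans h2).symm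
  have hch : ((n : ℝ) - j) * (n.choose j : ℝ) = (n : ℝ) * ((n - 1).choose j : ℝ) := by
    have := congrArg (Nat.cast : ℕ → ℝ) hnat
    push_cast [Nat.cast_sub (show j ≤ n by omega)] at this
    convert this using 2
  have hc1 : ((n - 1).choose j : ℝ) ≠ 0 := by
    have := Nat.choose_pos hj
    positivity
  have hc2 : (n.choose j : ℝ) ≠ 0 := by
    have := Nat.choose_pos (show j ≤ n by omega)
    positivity
  have hn0 : (n : ℝ) ≠ 0 := by positivity
  unfold Hsym
  rw [div_eq_div_iff hc1 hc2]
  apply mul_left_cancel₀ hn0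
  calc (n : ℝ) * (esymm (n - 1) j w * (n.choose j : ℝ))
      = ((n : ℝ) * esymm (n - 1) j w) * (n.choose j : ℝ) := by ring
    _ = (((n : ℝ) - j) * esymm n j v) * (n.choose j : ℝ) := by rw [hw j hj]
    _ = esymm n j v * (((n : ℝ) - j) * (n.choose j : ℝ)) := by ring
    _ = esymm n j v * ((n : ℝ) * ((n - 1).choose j : ℝ)) := by rw [hch]
    _ = (n : ℝ) * (esymm n j v * ((n - 1).choose j : ℝ)) := by ring

private lemma newton_aux : ∀ n : ℕ, ∀ v : Fin n → ℝ, ∀ r : ℕ, 1 ≤ r → r + 1 ≤ n →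
    Hsym n (r - 1) v * Hsym n (r + 1) v ≤ Hsym n r v ^ 2 := by
  intro n
  induction n using Nat.strong_induction_on with
  | _ n ih =>
    intro v r hr1 hrn
    rcases eq_or_lt_of_le hrn with heq | hlt
    · have hn2 : 2 ≤ n := by omega
      have := newton_top n hn2 v
      rw [show r - 1 = n - 2 by omega, show r + 1 = n by omega, show r = n - 1 by omega]
      exact this
    · obtain ⟨w, hw⟩ := deriv_step n (by omega) v
      have hH : ∀ j, j ≤ n - 1 → Hsym (n - 1) j w = Hsym n j v :=
        hsym_transfer n (by omega) v w hw
      have := ih (n - 1) (by omega) w r hr1 (by omega)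
      rw [hH (r - 1) (by omega), hH (r + 1) (by omega), hH r (by omega)] at this
      exact this

/-- Newton–Maclaurin inequality: `H_r² ≥ H_{r-1} H_{r+1}`. -/
theorem newton_maclaurin (n r : ℕ) (hn : 1 < n) (hr : 1 ≤ r) (hr' : r ≤ n - 1)
    (lam : Fin n → ℝ) :
    Hsym n r lam ^ 2 ≥ Hsym n (r - 1) lam * Hsym n (r + 1) lam :=
  newton_aux n lam r hr (by omega)
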